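/- Let n ≥ 2, let μ_1,…,μ_{n−1} be pairwise distinct nonzero reals, α_1,…,α_{n−1}, β reals, J ⊆ ℝ an open interval with 0 ∉ J, and let y_1,…,y_{n−1}, z_1,…,z_{n−1} : J → ℝ be smooth satisfying the system (yzx) with the constraint (v). Define y_n := −x/2 − (y_1 + ⋯ + y_{n−1}) and α_n := 1/2 − 2β − (α_1 + ⋯ + α_{n−1}). Fix k ∈ {1,…,n−1}, suppose z_k is nowhere vanishing and z_j − z_k is nowhere vanishing for each j ≠ k, and define (the Bäcklund transformation B_k): z̃_j := μ_k/z_k − (μ_j − μ_k)/(z_j − z_k) for j ≠ k, z̃_k := μ_k/z_k; ỹ_j := ((z_j − z_k)/(μ_j − μ_k))·((z_j − z_k) y_j − α_j) for j ≠ k; ỹ_k := −x/2 − Σ_{j≠k, j≤n−1} ỹ_j + (z_k/μ_k)(z_k y_n + α_n); α̃_j := α_j for j ≠ k, α̃_k := 1 − α_k, β̃ := β + α_k − 1/2. Then (ỹ_j, z̃_j), j = 1,…,n−1, satisfy the system (yzx) with the constraint (v) for the parameters α̃_1,…,α̃_{n−1}, β̃ and the same μ_1,…,μ_{n−1}. 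-/

import Mathlib

open Set Function

set_option maxHeartbeats 2000000 in
/-- the Bäcklund transformation `B_k` for the t = 0 system (yzx), (v)
maps solutions with parameters `(α, β)` to solutions with parameters
`α̃_k = 1 − α_k`, `α̃_j = α_j` (`j ≠ k`), `β̃ = β + α_k − 1/2`, and the same `μ`'s. -/
theorem statement19
    (n : ℕ) (hn : 2 ≤ n)
    (mu : Fin (n-1) → ℝ) (hmu : Function.Injective mu) (hmune : ∀ j, mu j ≠ 0)
    (alp : Fin (n-1) → ℝ) (bet : ℝ)
    (a b : ℝ) (J : Set ℝ) (hJ : J = Set.Ioo a b) (hJ0 : (0:ℝ) ∉ J)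
    (y z : Fin (n-1) → ℝ → ℝ)
    (hysmooth : ∀ j, ContDiffOn ℝ (⊤ : ℕ∞) (y j) J)
    (hzsmooth : ∀ j, ContDiffOn ℝ (⊤ : ℕ∞) (z j) J)
    -- the constraint (v)
    (v : ℝ → ℝ)
    (hv : ∀ x ∈ J, v x = (2/x) * ((∑ j, y j x * z j x) + bet))
    -- the system (yzx)
    (hyzx : ∀ j, ∀ x ∈ J,
      deriv (y j) x = 2 * y j x * (z j x + v x) - alp j
      ∧ deriv (z j) x = -(z j x) * (z j x + 2 * v x) - mu j)
    -- the "extra" variable and parameter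
    (yn : ℝ → ℝ) (hyn : ∀ x : ℝ, yn x = -x/2 - ∑ j, y j x)
    (alpn : ℝ) (halpn : alpn = 1/2 - 2*bet - ∑ j, alp j)
    -- the fixed index and the nondegeneracy assumptions
    (k : Fin (n-1))
    (hzkne : ∀ x ∈ J, z k x ≠ 0)
    (hzdiff : ∀ j, j ≠ k → ∀ x ∈ J, z j x - z k x ≠ 0)
    -- the Bäcklund transformation B_k
    (ny nz : Fin (n-1) → ℝ → ℝ) (nalp : Fin (n-1) → ℝ) (nbet : ℝ)
    (hnz : ∀ j, j ≠ k → ∀ x : ℝ,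
      nz j x = mu k / z k x - (mu j - mu k) / (z j x - z k x))
    (hnzk : ∀ x : ℝ, nz k x = mu k / z k x)
    (hny : ∀ j, j ≠ k → ∀ x : ℝ,
      ny j x = ((z j x - z k x) / (mu j - mu k)) * ((z j x - z k x) * y j x - alp j))
    (hnyk : ∀ x : ℝ,
      ny k x = -x/2 - (∑ j ∈ Finset.univ.erase k, ny j x)
                + (z k x / mu k) * (z k x * yn x + alpn))
    (hnalp : ∀ j, j ≠ k → nalp j = alp j) (hnalpk : nalp k = 1 - alp k)
    (hnbet : nbet = bet + alp k - 1/2) :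
    -- conclusion: (ỹ, z̃) satisfy (yzx) with the constraint (v) for (α̃, β̃)
    ∀ j, ∀ x ∈ J,
      deriv (ny j) x
        = 2 * ny j x * (nz j x + (2/x) * ((∑ i, ny i x * nz i x) + nbet)) - nalp j
      ∧ deriv (nz j) x
        = -(nz j x) * (nz j x + 2 * ((2/x) * ((∑ i, ny i x * nz i x) + nbet))) - mu j := by
  have hJopen : IsOpen J := by rw [hJ]; exact isOpen_Ioo
  intro j x hx
  have hx0 : x ≠ 0 := fun h => hJ0 (h ▸ hx)
  have hzk : z k x ≠ 0 := hzkne x hx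
  have hmuk : mu k ≠ 0 := hmune k
  have hdy : ∀ i, DifferentiableAt ℝ (y i) x := fun i =>
    ((hysmooth i).contDiffAt (hJopen.mem_nhds hx)).differentiableAt (by norm_num)
  have hdz : ∀ i, DifferentiableAt ℝ (z i) x := fun i =>
    ((hzsmooth i).contDiffAt (hJopen.mem_nhds hx)).differentiableAt (by norm_num)
  have Hzk := (hdz k).hasDerivAt
  have hdzk := (hyzx k x hx).2
  -- the key sum identity : the new constraint value
  have hsum : (∑ i, ny i x * nz i x) + nbet
      = (x/2) * (-(v x) - z k x - mu k / z k x) := by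
    have h1 : ∑ i, ny i x * nz i x
        = ny k x * nz k x + ∑ i ∈ Finset.univ.erase k, ny i x * nz i x :=
      (Finset.add_sum_erase _ _ (Finset.mem_univ k)).symm
    have h2 : ∑ i ∈ Finset.univ.erase k, ny i x * nz i x
        = (∑ i ∈ Finset.univ.erase k, (mu k / z k x) * ny i x)
          - ∑ i ∈ Finset.univ.erase k, ((z i x - z k x) * y i x - alp i) := by
      rw [← Finset.sum_sub_distrib]
      refine Finset.sum_congr rfl fun i hi => ?_
      have hik : i ≠ k := Finset.ne_of_mem_erase hi
      have hzd := hzdiff i hik x hx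
      have hmuik : mu i - mu k ≠ 0 := sub_ne_zero.mpr fun h => hik (hmu h)
      rw [hnz i hik x, hny i hik x]
      field_simp
    have h3 : ∑ i ∈ Finset.univ.erase k, ny i x
        = -x/2 - ny k x + (z k x / mu k) * (z k x * yn x + alpn) := by
      have := hnyk x; linarith
    have h4 : ∑ i ∈ Finset.univ.erase k, ((z i x - z k x) * y i x - alp i)
        = ((∑ i, y i x * z i x) - z k x * (∑ i, y i x) - (∑ i, alp i)) + alp k := by
      rw [Finset.sum_erase_eq_sub (Finset.mem_univ k)]
      have h5 : ∑ i, ((z i x - z k x) * y i x - alp i)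
          = (∑ i, y i x * z i x) - z k x * (∑ i, y i x) - (∑ i, alp i) := by
        rw [Finset.sum_sub_distrib]
        congr 1
        rw [Finset.mul_sum, ← Finset.sum_sub_distrib]
        exact Finset.sum_congr rfl fun i _ => by ring
      rw [h5]; ring
    rw [h1, h2, ← Finset.mul_sum, h3, h4, hnzk x, hv x hx, hyn x, halpn, hnbet]
    field_simp
    ring
  have hnv : (2/x) * ((∑ i, ny i x * nz i x) + nbet)
      = -(v x) - z k x - mu k / z k x := by
    rw [hsum]
    field_simp
  set nvx : ℝ := -(v x) - z k x - mu k / z k x with hnvx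
  -- the z-equations
  have hbz : ∀ i, deriv (nz i) x
      = -(nz i x) * (nz i x + 2 * ((2/x) * ((∑ i, ny i x * nz i x) + nbet))) - mu i := by
    intro i
    rw [hnv]
    by_cases hik : i = k
    · rw [hik]
      have H : HasDerivAt (nz k) ((0 * z k x - mu k * deriv (z k) x) / z k x ^ 2) x := by
        rw [funext hnzk]
        exact (hasDerivAt_const x (mu k)).div Hzk hzk
      rw [H.deriv, hdzk, hnzk x, hnvx]
      field_simp
      ring
    · have hzd := hzdiff i hik x hx
      have hmuik : mu i - mu k ≠ 0 := sub_ne_zero.mpr fun h => hik (hmu h)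
      have Hzi := (hdz i).hasDerivAt
      have H : HasDerivAt (nz i)
          ((0 * z k x - mu k * deriv (z k) x) / z k x ^ 2
            - (0 * (z i x - z k x) - (mu i - mu k) * (deriv (z i) x - deriv (z k) x))
              / (z i x - z k x) ^ 2) x := by
        rw [funext (hnz i hik)]
        exact ((hasDerivAt_const x (mu k)).div Hzk hzk).sub
          ((hasDerivAt_const x (mu i - mu k)).div (Hzi.sub Hzk) hzd)
      rw [H.deriv, hdzk, (hyzx i x hx).2, hnz i hik x, hnvx]
      field_simp
      ring
  -- the y-equations for i ≠ k, in HasDerivAt form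
  have hcy : ∀ i ∈ Finset.univ.erase k,
      HasDerivAt (ny i) (2 * ny i x * (nz i x + nvx) - alp i) x := by
    intro i hi
    have hik : i ≠ k := Finset.ne_of_mem_erase hi
    have hzd := hzdiff i hik x hx
    have hmuik : mu i - mu k ≠ 0 := sub_ne_zero.mpr fun h => hik (hmu h)
    have Hzi := (hdz i).hasDerivAt
    have Hyi := (hdy i).hasDerivAt
    have H : HasDerivAt (ny i)
        (((deriv (z i) x - deriv (z k) x) / (mu i - mu k))
            * ((z i x - z k x) * y i x - alp i)
          + ((z i x - z k x) / (mu i - mu k))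
            * ((deriv (z i) x - deriv (z k) x) * y i x + (z i x - z k x) * deriv (y i) x)) x := by
      rw [funext (hny i hik)]
      exact ((Hzi.sub Hzk).div_const (mu i - mu k)).mul
        (((Hzi.sub Hzk).mul Hyi).sub_const (alp i))
    convert H using 1
    rw [hdzk, (hyzx i x hx).2, (hyzx i x hx).1, hny i hik x, hnz i hik x, hnvx]
    field_simp
    ring
  -- the y-equations
  have hby : ∀ i, deriv (ny i) x
      = 2 * ny i x * (nz i x + (2/x) * ((∑ i, ny i x * nz i x) + nbet)) - nalp i := by
    intro i
    rw [hnv]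
    by_cases hik : i = k
    · rw [hik, hnalpk]
      have Hyn : HasDerivAt yn (-1/2 - ∑ i, deriv (y i) x) x := by
        rw [funext hyn]
        exact ((hasDerivAt_id x).neg.div_const 2).sub
          (HasDerivAt.fun_sum fun i _ => (hdy i).hasDerivAt)
      have Hsum : HasDerivAt (fun t => ∑ i ∈ Finset.univ.erase k, ny i t)
          (∑ i ∈ Finset.univ.erase k, (2 * ny i x * (nz i x + nvx) - alp i)) x :=
        HasDerivAt.fun_sum hcy
      have H : HasDerivAt (ny k)
          ((-1/2 - ∑ i ∈ Finset.univ.erase k, (2 * ny i x * (nz i x + nvx) - alp i))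
            + ((deriv (z k) x / mu k) * (z k x * yn x + alpn)
               + (z k x / mu k)
                 * (deriv (z k) x * yn x + z k x * (-1/2 - ∑ i, deriv (y i) x)))) x := by
        rw [funext hnyk]
        exact (((hasDerivAt_id x).neg.div_const 2).sub Hsum).add
          ((Hzk.div_const (mu k)).mul ((Hzk.mul Hyn).add_const alpn))
      have hS2 : ∑ i ∈ Finset.univ.erase k, (2 * ny i x * (nz i x + nvx) - alp i)
          = 2 * (∑ i ∈ Finset.univ.erase k, ny i x * nz i x)
            + (2 * nvx) * (∑ i ∈ Finset.univ.erase k, ny i x)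
            - (∑ i ∈ Finset.univ.erase k, alp i) := by
        rw [Finset.sum_sub_distrib]
        congr 1
        rw [Finset.mul_sum, Finset.mul_sum, ← Finset.sum_add_distrib]
        exact Finset.sum_congr rfl fun i _ => by ring
      have herase_nynz : ∑ i ∈ Finset.univ.erase k, ny i x * nz i x
          = ((x/2) * nvx - nbet) - ny k x * nz k x := by
        rw [Finset.sum_erase_eq_sub (Finset.mem_univ k)]
        have : (∑ i, ny i x * nz i x) = (x/2) * nvx - nbet := by
          linarith
        rw [this]
      have herase_ny : ∑ i ∈ Finset.univ.erase k, ny i x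
          = -x/2 - ny k x + (z k x / mu k) * (z k x * yn x + alpn) := by
        have := hnyk x; linarith
      have herase_alp : ∑ i ∈ Finset.univ.erase k, alp i = (∑ i, alp i) - alp k :=
        Finset.sum_erase_eq_sub (Finset.mem_univ k)
      have hsumderiv : ∑ i, deriv (y i) x
          = 2 * (∑ i, y i x * z i x) + 2 * v x * (∑ i, y i x) - ∑ i, alp i := by
        rw [Finset.sum_congr rfl fun i _ => (hyzx i x hx).1, Finset.sum_sub_distrib]
        congr 1
        rw [Finset.mul_sum, Finset.mul_sum, ← Finset.sum_add_distrib]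
        exact Finset.sum_congr rfl fun i _ => by ring
      rw [H.deriv, hS2, herase_nynz, herase_ny, herase_alp, hsumderiv, hdzk, hnzk x,
        hyn x, halpn, hnbet, hnvx, hv x hx]
      field_simp
      ring
    · rw [hnalp i hik]
      exact (hcy i (Finset.mem_erase.mpr ⟨hik, Finset.mem_univ i⟩)).deriv
  exact ⟨hby j, hbz j⟩
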